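/- arXiv:2009.03538 — 2 statements merged into one kernel-verified Lean document; each statement's English description precedes it below -/
import Mathlib

section
/- For symmetric positive definite matrices P_i ∈ ℝ^{n×n}, P_j ∈ ℝ^{m×m}, an arbitrary cross-covariance matrix P_{ij} ∈ ℝ^{n×m}, and any ω ∈ (0,1): if the block matrix [[P_i, P_{ij}],[P_{ij}^T, P_j]] is positive semidefinite, then the block matrix [[(1/ω)P_i, 0],[0, (1/(1-ω))P_j]] minus [[P_i, P_{ij}],[P_{ij}^T, P_j]] is positive semidefinite, i.e., the block-diagonal inflation is an upper bound in the Loewner order regardless of the unknown cross term P_{ij}. -/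
open Matrix

/-- Eq. (14), covariance-intersection bound: for SPD `P_i`, `P_j`,
any cross-covariance `P_ij`, and `ω ∈ (0,1)`, if `[[P_i, P_ij],[P_ijᵀ, P_j]] ⪰ 0` then
`[[(1/ω)P_i, 0],[0, (1/(1-ω))P_j]] ⪰ [[P_i, P_ij],[P_ijᵀ, P_j]]` in the Loewner order. -/
theorem covariance_intersection_block_bound
    {n m : ℕ} (Pi : Matrix (Fin n) (Fin n) ℝ) (Pj : Matrix (Fin m) (Fin m) ℝ)
    (Pij : Matrix (Fin n) (Fin m) ℝ)
    (hPi : Pi.PosDef) (hPj : Pj.PosDef)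
    (ω : ℝ) (hω0 : 0 < ω) (hω1 : ω < 1)
    (hjoint : (Matrix.fromBlocks Pi Pij Pijᵀ Pj).PosSemidef) :
    (Matrix.fromBlocks ((1/ω) • Pi) 0 0 ((1/(1-ω)) • Pj)
      - Matrix.fromBlocks Pi Pij Pijᵀ Pj).PosSemidef := by
  have hω1' : 0 < 1 - ω := by linarith
  set t : ℝ := Real.sqrt ((1 - ω)/ω) with ht
  set s : ℝ := -Real.sqrt (ω/(1 - ω)) with hs
  have ht2 : t * t = 1/ω - 1 := by
    rw [ht, Real.mul_self_sqrt (le_of_lt (div_pos hω1' hω0))]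
    field_simp
  have hs2 : s * s = 1/(1-ω) - 1 := by
    rw [hs, neg_mul_neg, Real.mul_self_sqrt (le_of_lt (div_pos hω0 hω1'))]
    field_simp
    ring
  have hts : t * s = -1 := by
    rw [ht, hs, mul_neg, neg_eq_iff_eq_neg, neg_neg,
      ← Real.sqrt_mul (le_of_lt (div_pos hω1' hω0))]
    rw [show (1 - ω)/ω * (ω/(1 - ω)) = 1 by field_simp]
    exact Real.sqrt_one
  have key := hjoint.conjTranspose_mul_mul_same
    (Matrix.fromBlocks (t • (1 : Matrix (Fin n) (Fin n) ℝ)) 0 0 (s • (1 : Matrix (Fin m) (Fin m) ℝ)))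
  have heq : (Matrix.fromBlocks (t • (1 : Matrix (Fin n) (Fin n) ℝ)) 0 0 (s • (1 : Matrix (Fin m) (Fin m) ℝ)))ᴴ
      * (Matrix.fromBlocks Pi Pij Pijᵀ Pj)
      * (Matrix.fromBlocks (t • (1 : Matrix (Fin n) (Fin n) ℝ)) 0 0 (s • (1 : Matrix (Fin m) (Fin m) ℝ)))
      = Matrix.fromBlocks ((1/ω) • Pi) 0 0 ((1/(1-ω)) • Pj)
        - Matrix.fromBlocks Pi Pij Pijᵀ Pj := by
    rw [sub_eq_add_neg, Matrix.fromBlocks_neg, Matrix.fromBlocks_add]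
    simp only [Matrix.fromBlocks_conjTranspose, Matrix.fromBlocks_multiply,
      Matrix.conjTranspose_smul, Matrix.conjTranspose_one, Matrix.conjTranspose_zero,
      Matrix.mul_smul, Matrix.smul_mul, Matrix.mul_zero, Matrix.zero_mul,
      Matrix.mul_one, Matrix.one_mul, add_zero, zero_add, smul_smul, smul_zero, star_trivial]
    rw [show (t * t) • Pi = (1/ω) • Pi + -Pi by rw [ht2]; module,
      show (s * t) • Pij = -Pij by rw [mul_comm s t, hts]; module,
      show (t * s) • Pijᵀ = -Pijᵀ by rw [hts]; module,
      show (s * s) • Pj = (1/(1-ω)) • Pj + -Pj by rw [hs2]; module]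
  rw [heq] at key
  exact key
end

section
/- Let Σ be a symmetric positive semidefinite (n+m+1)×(n+m+1) matrix with block structure [[P_i, P_{ij}, C_i],[P_{ij}^T, P_j, C_j],[C_i^T, C_j^T, B]] where P_i (n×n) and P_j (m×m) are positive definite and B > 0 is a scalar. Then for any ω ∈ (0,1), the matrix [[(1/ω)P_i, 0, C_i],[0, (1/(1−ω))P_j, C_j],[C_i^T, C_j^T, B]] − Σ is positive semidefinite. -/
open Matrix

theorem ci_core {n m : ℕ} (Pi : Matrix (Fin n) (Fin n) ℝ) (Pj : Matrix (Fin m) (Fin m) ℝ)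
    (Pij : Matrix (Fin n) (Fin m) ℝ)
    (hS : (Matrix.fromBlocks Pi Pij Pijᵀ Pj).PosSemidef)
    (a b : ℝ) (ha : 0 < a) (hab : a * b = 1) :
    (Matrix.fromBlocks (a • Pi) (-Pij) (-Pijᵀ) (b • Pj)).PosSemidef := by
  obtain ⟨hH, hQ⟩ := posSemidef_iff_dotProduct_mulVec.mp hS
  rw [isHermitian_fromBlocks_iff] at hH
  obtain ⟨h1, h2, h3, h4⟩ := hH
  rw [posSemidef_iff_dotProduct_mulVec]
  constructor
  · rw [isHermitian_fromBlocks_iff]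
    refine ⟨?_, by simp, by simp, ?_⟩
    · show (a • Pi)ᴴ = a • Pi; rw [conjTranspose_smul, h1.eq]; simp [star]
    · show (b • Pj)ᴴ = b • Pj; rw [conjTranspose_smul, h4.eq]; simp [star]
  · intro z
    set u := z ∘ Sum.inl with hu
    set v := z ∘ Sum.inr with hv
    have hz : z = Sum.elim u v := (Sum.elim_comp_inl_inr z).symm
    set t := Real.sqrt a with ht
    have ht0 : 0 < t := Real.sqrt_pos.mpr ha
    have ht2 : t * t = a := Real.mul_self_sqrt ha.le
    have hb : b = t⁻¹ * t⁻¹ := by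
      field_simp
      nlinarith
    have key := hQ (Sum.elim (t • u) (-(t⁻¹ • v)))
    simp only [star_trivial, fromBlocks_mulVec, sumElim_dotProduct_sumElim,
      Sum.elim_comp_inl, Sum.elim_comp_inr, mulVec_smul, mulVec_neg, dotProduct_add,
      dotProduct_smul, neg_dotProduct, dotProduct_neg, smul_dotProduct, smul_eq_mul,
      smul_neg] at key ⊢
    rw [hz]
    simp only [fromBlocks_mulVec, sumElim_dotProduct_sumElim, Sum.elim_comp_inl,
      Sum.elim_comp_inr, Matrix.smul_mulVec, mulVec_neg, dotProduct_add,
      dotProduct_neg, dotProduct_smul, smul_eq_mul, neg_mulVec]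
    have hPijT : v ⬝ᵥ Pijᵀ *ᵥ u = u ⬝ᵥ Pij *ᵥ v := by
      rw [dotProduct_mulVec, vecMul_transpose, dotProduct_comm]
    rw [hPijT] at key ⊢
    have hti : t * t⁻¹ = 1 := mul_inv_cancel₀ ht0.ne'
    have hit : t⁻¹ * t = 1 := inv_mul_cancel₀ ht0.ne'
    set X := u ⬝ᵥ Pi *ᵥ u with hX
    set Y := u ⬝ᵥ Pij *ᵥ v with hY
    set Z := v ⬝ᵥ Pj *ᵥ v with hZ
    have e1 : t * (t * X) = a * X := by rw [← mul_assoc, ht2]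
    have e2 : -(t⁻¹ * (t * Y)) = -Y := by rw [← mul_assoc, hit, one_mul]
    have e3 : t * -(t⁻¹ * Y) = -Y := by
      rw [mul_neg, ← mul_assoc, hti, one_mul]
    have e4 : -(t⁻¹ * -(t⁻¹ * Z)) = b * Z := by
      rw [mul_neg, neg_neg, ← mul_assoc, ← hb]
    rw [e1, e2, e3, e4] at key
    linarith


/-- extended-state CI bound in the Schmidt–Kalman NLoS update:
for a PSD joint covariance `Σ = [[P_i, P_ij, C_i],[P_ijᵀ, P_j, C_j],[C_iᵀ, C_jᵀ, B]]`
with `P_i, P_j` positive definite and scalar bias variance `B > 0`, and any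
`ω ∈ (0,1)`, the block-diagonal inflation that zeros out the cross term `P_ij`
(keeping the bias rows/columns) dominates `Σ` in the Loewner order. -/
theorem extended_state_ci_bound
    {n m : ℕ} (Pi : Matrix (Fin n) (Fin n) ℝ) (Pj : Matrix (Fin m) (Fin m) ℝ)
    (Pij : Matrix (Fin n) (Fin m) ℝ)
    (Ci : Matrix (Fin n) (Fin 1) ℝ) (Cj : Matrix (Fin m) (Fin 1) ℝ)
    (B : Matrix (Fin 1) (Fin 1) ℝ)
    (hPi : Pi.PosDef) (hPj : Pj.PosDef) (hB : 0 < B 0 0)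
    (ω : ℝ) (hω0 : 0 < ω) (hω1 : ω < 1)
    (hjoint : (Matrix.fromBlocks (Matrix.fromBlocks Pi Pij Pijᵀ Pj)
        (Matrix.fromRows Ci Cj) (Matrix.fromRows Ci Cj)ᵀ B).PosSemidef) :
    (Matrix.fromBlocks (Matrix.fromBlocks ((1/ω) • Pi) 0 0 ((1/(1-ω)) • Pj))
        (Matrix.fromRows Ci Cj) (Matrix.fromRows Ci Cj)ᵀ B
      - Matrix.fromBlocks (Matrix.fromBlocks Pi Pij Pijᵀ Pj)
        (Matrix.fromRows Ci Cj) (Matrix.fromRows Ci Cj)ᵀ B).PosSemidef := by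
  have hω1' : 0 < 1 - ω := by linarith
  -- the inner block is PSD
  have hS : (Matrix.fromBlocks Pi Pij Pijᵀ Pj).PosSemidef := by
    have h := hjoint.submatrix Sum.inl
    have heq : (Matrix.fromBlocks (Matrix.fromBlocks Pi Pij Pijᵀ Pj)
        (Matrix.fromRows Ci Cj) (Matrix.fromRows Ci Cj)ᵀ B).submatrix Sum.inl Sum.inl
        = Matrix.fromBlocks Pi Pij Pijᵀ Pj := by
      ext i j; simp [Matrix.submatrix, Matrix.fromBlocks]
    rwa [heq] at h
  set a : ℝ := (1 - ω) / ω with ha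
  set b : ℝ := ω / (1 - ω) with hb
  have ha0 : 0 < a := div_pos hω1' hω0
  have hab : a * b = 1 := by
    rw [ha, hb]; field_simp
  have hM := ci_core Pi Pj Pij hS a b ha0 hab
  have hdiff : (Matrix.fromBlocks (Matrix.fromBlocks ((1/ω) • Pi) 0 0 ((1/(1-ω)) • Pj))
        (Matrix.fromRows Ci Cj) (Matrix.fromRows Ci Cj)ᵀ B
      - Matrix.fromBlocks (Matrix.fromBlocks Pi Pij Pijᵀ Pj)
        (Matrix.fromRows Ci Cj) (Matrix.fromRows Ci Cj)ᵀ B)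
      = Matrix.fromBlocks (Matrix.fromBlocks (a • Pi) (-Pij) (-Pijᵀ) (b • Pj)) 0 0 0 := by
    ext i j
    cases i with
    | inl i => cases j with
      | inl j =>
        cases i with
        | inl i => cases j with
          | inl j =>
            simp [Matrix.fromBlocks, Matrix.sub_apply, ha]
            field_simp
          | inr j => simp [Matrix.fromBlocks, Matrix.sub_apply]
        | inr i => cases j with
          | inl j => simp [Matrix.fromBlocks, Matrix.sub_apply]
          | inr j =>
            simp [Matrix.fromBlocks, Matrix.sub_apply, hb]
            field_simp
            ring
      | inr j => simp [Matrix.fromBlocks, Matrix.sub_apply]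
    | inr i => cases j with
      | inl j => simp [Matrix.fromBlocks, Matrix.sub_apply]
      | inr j => simp [Matrix.fromBlocks, Matrix.sub_apply]
  rw [hdiff]
  rw [posSemidef_iff_dotProduct_mulVec]
  constructor
  · rw [Matrix.isHermitian_fromBlocks_iff]
    exact ⟨hM.1, by simp, by simp, by simp [Matrix.IsHermitian]⟩
  · intro z
    set w := z ∘ Sum.inl with hw
    have hz : z = Sum.elim w (z ∘ Sum.inr) := (Sum.elim_comp_inl_inr z).symm
    rw [hz]
    have h0 := hM.dotProduct_mulVec_nonneg w
    simp only [star_trivial, Matrix.fromBlocks_mulVec, Matrix.zero_mulVec, add_zero,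
      zero_add, sumElim_dotProduct_sumElim, dotProduct_zero] at h0 ⊢
    exact h0
end
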